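/- Let σ be a generator of Γ = Gal(E/F). If a ∈ N_n(E) satisfies the norm-one condition a · σ(a) · σ²(a) · ⋯ · σ^{l-1}(a) = 1 (the identity matrix), then there exists b ∈ N_n(E) such that a = b · σ(b)^{-1}. (In other words, the first nonabelian Galois cohomology H¹(Γ, N_n(E)) is trivial.) -/

import Mathlib

/-- `N_n(E)`: the group of `n × n` unipotent upper triangular matrices, i.e. upper
triangular matrices whose diagonal entries are all `1`. -/
def IsUnipotentUpperTriangular {E : Type*} [Field E] {n : ℕ}
    (a : Matrix (Fin n) (Fin n) E) : Prop :=
  (∀ i, a i i = 1) ∧ ∀ i j : Fin n, j < i → a i j = 0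

section Aux

variable {E : Type*} [Field E] {n : ℕ}

lemma unip_one : IsUnipotentUpperTriangular (1 : Matrix (Fin n) (Fin n) E) := by
  constructor
  · intro i; simp
  · intro i j h; exact Matrix.one_apply_ne h.ne'

lemma unip_mul {A B : Matrix (Fin n) (Fin n) E}
    (hA : IsUnipotentUpperTriangular A) (hB : IsUnipotentUpperTriangular B) :
    IsUnipotentUpperTriangular (A * B) := by
  obtain ⟨hA1, hA0⟩ := hA
  obtain ⟨hB1, hB0⟩ := hB
  constructor
  · intro i
    rw [Matrix.mul_apply, Finset.sum_eq_single i]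
    · rw [hA1, hB1, one_mul]
    · intro k _ hk
      rcases lt_or_gt_of_ne hk with h | h
      · rw [hA0 i k h, zero_mul]
      · rw [hB0 k i h, mul_zero]
    · intro h; exact absurd (Finset.mem_univ i) h
  · intro i j hji
    rw [Matrix.mul_apply]
    apply Finset.sum_eq_zero
    intro k _
    by_cases h : k < i
    · rw [hA0 i k h, zero_mul]
    · rw [hB0 k j (lt_of_lt_of_le hji (not_lt.1 h)), mul_zero]

lemma unip_det {A : Matrix (Fin n) (Fin n) E}
    (hA : IsUnipotentUpperTriangular A) : A.det = 1 := by
  rw [Matrix.det_of_upperTriangular (fun i j h => hA.2 i j h)]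
  simp [hA.1]

lemma unip_map {A : Matrix (Fin n) (Fin n) E}
    (hA : IsUnipotentUpperTriangular A) {f : E → E} (h1 : f 1 = 1) (h0 : f 0 = 0) :
    IsUnipotentUpperTriangular (A.map f) := by
  constructor
  · intro i; rw [Matrix.map_apply, hA.1 i, h1]
  · intro i j h; rw [Matrix.map_apply, hA.2 i j h, h0]

end Aux

theorem h1_unipotent_trivial
    (F E : Type*) [Field F] [Field E] [Algebra F E] [IsGalois F E]
    (l : ℕ) (hl : l.Prime) (hrank : Module.finrank F E = l)
    (σ : E ≃ₐ[F] E) (hσ : ∀ τ : E ≃ₐ[F] E, τ ∈ Subgroup.zpowers σ)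
    (n : ℕ) (a : Matrix (Fin n) (Fin n) E)
    (ha : IsUnipotentUpperTriangular a)
    (hnorm : ((List.range l).map fun i => a.map ⇑(σ ^ i)).prod = 1) :
    ∃ b : Matrix (Fin n) (Fin n) E, IsUnipotentUpperTriangular b ∧
      a = b * (b.map ⇑σ)⁻¹ := by
  classical
  haveI : FiniteDimensional F E := Module.finite_of_finrank_pos (by rw [hrank]; exact hl.pos)
  -- order of σ is l
  have hcard : Fintype.card (E ≃ₐ[F] E) = l := by
    rw [← Nat.card_eq_fintype_card, IsGalois.card_aut_eq_finrank]; exact hrank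
  have htop : Subgroup.zpowers σ = ⊤ := by
    ext τ; simp [hσ τ]
  have horder : orderOf σ = l := by
    rw [← Nat.card_zpowers, htop, Nat.card_congr Subgroup.topEquiv.toEquiv,
      Nat.card_eq_fintype_card, hcard]
  have hσl : σ ^ l = 1 := by rw [← horder]; exact pow_orderOf_eq_one σ
  have hl0 : (0:ℤ) < (l:ℤ) := by exact_mod_cast hl.pos
  -- choose an element μ of trace 1
  obtain ⟨μ, hμ⟩ := Algebra.trace_surjective F E 1
  have htr : ∑ i ∈ Finset.range l, (σ ^ i) μ = 1 := by
    have h1 : algebraMap F E (Algebra.trace F E μ) = ∑ τ : E ≃ₐ[F] E, τ μ :=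
      trace_eq_sum_automorphisms μ
    rw [hμ, map_one] at h1
    rw [h1]
    apply Finset.sum_bij (fun i _ => σ ^ i)
    · intro i _; exact Finset.mem_univ _
    · intro i hi j hj hij
      exact pow_injOn_Iio_orderOf (by simpa [horder] using Finset.mem_range.1 hi)
        (by simpa [horder] using Finset.mem_range.1 hj) hij
    · intro τ _
      obtain ⟨k, hk⟩ := Subgroup.mem_zpowers_iff.1 (hσ τ)
      refine ⟨(k % l).toNat, Finset.mem_range.2 ?_, ?_⟩
      · have h2 : k % l < l := Int.emod_lt_of_pos k hl0
        omega
      · have hnn : 0 ≤ k % l := Int.emod_nonneg k (by omega)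
        have : σ ^ ((k % l).toNat : ℤ) = τ := by
          rw [Int.toNat_of_nonneg hnn]
          rw [show ((l:ℤ)) = ((orderOf σ : ℕ) : ℤ) by rw [horder]]
          rw [zpow_mod_orderOf, hk]
        rw [← this, zpow_natCast]
    · intro i _; rfl
  -- partial products of the cocycle
  set C : ℕ → Matrix (Fin n) (Fin n) E :=
    fun i => ((List.range i).map fun j => a.map ⇑(σ ^ j)).prod with hC
  have hC0 : C 0 = 1 := by simp [hC]
  have hCunip : ∀ i, IsUnipotentUpperTriangular (C i) := by
    intro i
    induction i with
    | zero => rw [hC0]; exact unip_one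
    | succ k ih =>
        have : C (k + 1) = C k * a.map ⇑(σ ^ k) := by
          simp [hC, List.range_succ]
        rw [this]
        exact unip_mul ih (unip_map ha (map_one (σ ^ k)) (map_zero (σ ^ k)))
  have hCl : C l = 1 := hnorm
  -- key recurrence : C (i+1) = a * (C i).map σ
  have hpowsucc : ∀ j : ℕ, ⇑(σ ^ (j + 1)) = ⇑σ ∘ ⇑(σ ^ j) := by
    intro j
    funext x
    rw [pow_succ']
    exact AlgEquiv.mul_apply σ (σ ^ j) x
  have hrec : ∀ i, C (i + 1) = a * (C i).map ⇑σ := by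
    intro i
    have hmap : (C i).map ⇑σ
        = ((List.range i).map fun j => a.map ⇑(σ ^ (j + 1))).prod := by
      have h1 : (C i).map ⇑σ = (σ : E →+* E).mapMatrix (C i) := by
        rw [RingHom.mapMatrix_apply]; rfl
      rw [h1, hC]
      rw [map_list_prod ((σ : E →+* E).mapMatrix : Matrix (Fin n) (Fin n) E →+* _)]
      rw [List.map_map]
      congr 1
      apply List.map_congr_left
      intro j _
      simp only [Function.comp_apply, RingHom.mapMatrix_apply, Matrix.map_map]
      rw [hpowsucc j]
      rfl
    rw [hmap]
    simp only [hC]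
    rw [List.range_succ_eq_map]
    simp only [List.map_cons, List.prod_cons, List.map_map]
    have h0 : a.map ⇑(σ ^ 0) = a := by
      rw [pow_zero]
      have : ⇑(1 : E ≃ₐ[F] E) = id := rfl
      rw [this, Matrix.map_id]
    rw [h0]
    rfl
  -- define b
  set f : ℕ → Matrix (Fin n) (Fin n) E := fun i => (σ ^ i) μ • C i with hf
  set b : Matrix (Fin n) (Fin n) E := ∑ i ∈ Finset.range l, f i with hb
  have hbunip : IsUnipotentUpperTriangular b := by
    constructor
    · intro i
      rw [hb, Matrix.sum_apply]
      calc ∑ k ∈ Finset.range l, f k i i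
          = ∑ k ∈ Finset.range l, (σ ^ k) μ := by
            apply Finset.sum_congr rfl
            intro k _
            rw [hf]
            simp [Matrix.smul_apply, smul_eq_mul, (hCunip k).1 i]
        _ = 1 := htr
    · intro i j hji
      rw [hb, Matrix.sum_apply]
      apply Finset.sum_eq_zero
      intro k _
      rw [hf]
      simp [Matrix.smul_apply, smul_eq_mul, (hCunip k).2 i j hji]
  -- key identity : a * b.map σ = b
  have hbmap : b.map ⇑σ = ∑ i ∈ Finset.range l, (σ ^ (i + 1)) μ • (C i).map ⇑σ := by
    ext i j
    rw [Matrix.map_apply, hb, Matrix.sum_apply, Matrix.sum_apply, map_sum]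
    apply Finset.sum_congr rfl
    intro k _
    rw [hf]
    simp only [Matrix.smul_apply, smul_eq_mul, Matrix.map_apply, map_mul]
    congr 1
    rw [hpowsucc k]
    rfl
  have hkey : a * b.map ⇑σ = b := by
    rw [hbmap, Finset.mul_sum]
    have hterm : ∀ k ∈ Finset.range l,
        a * ((σ ^ (k + 1)) μ • (C k).map ⇑σ) = f (k + 1) := by
      intro k _
      rw [mul_smul_comm, ← hrec k, hf]
    rw [Finset.sum_congr rfl hterm]
    have hf0 : f 0 = μ • (1 : Matrix (Fin n) (Fin n) E) := by
      rw [hf]; simp [hC0]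
    have hfl : f l = μ • (1 : Matrix (Fin n) (Fin n) E) := by
      simp only [hf]; rw [hCl, hσl]; simp
    have e1 : ∑ i ∈ Finset.range (l + 1), f i
        = (∑ i ∈ Finset.range l, f (i + 1)) + f 0 := Finset.sum_range_succ' f l
    have e2 : ∑ i ∈ Finset.range (l + 1), f i
        = (∑ i ∈ Finset.range l, f i) + f l := Finset.sum_range_succ f l
    have : (∑ i ∈ Finset.range l, f (i + 1)) + f 0
        = (∑ i ∈ Finset.range l, f i) + f 0 := by
      rw [← e1, e2, hf0, hfl]
    exact add_right_cancel this
  -- conclude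
  refine ⟨b, hbunip, ?_⟩
  have hdet : IsUnit (b.map ⇑σ).det := by
    rw [unip_det (unip_map hbunip (map_one σ) (map_zero σ))]
    exact isUnit_one
  calc a = a * ((b.map ⇑σ) * (b.map ⇑σ)⁻¹) := by
        rw [Matrix.mul_nonsing_inv _ hdet, mul_one]
    _ = (a * b.map ⇑σ) * (b.map ⇑σ)⁻¹ := by rw [mul_assoc]
    _ = b * (b.map ⇑σ)⁻¹ := by rw [hkey]
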